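/- arXiv:2311.16440 — 3 statements merged into one kernel-verified Lean document; each statement's English description precedes it below -/
import Mathlib

section
/- Let r, R be positive integers, A an r×r real symmetric positive definite matrix, and H an R×r real matrix. Then for every real x > 0, the rescaled Tikhonov-regularization function admits the ridge-regularization decomposition f̃(x) := Hᵀ (H A Hᵀ + x I_R)⁻¹ H = A⁻¹ − x · A⁻¹ (x I_r + A Hᵀ H)⁻¹, where x I_r + A Hᵀ H is invertible. -/
open Matrix

lemma posDef_smul_aux {n : Type*} [Fintype n] {M : Matrix n n ℝ} (hM : M.PosDef)
    {x : ℝ} (hx : 0 < x) : (x • M).PosDef := by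
  refine ⟨?_, fun v hv => ?_⟩
  · unfold Matrix.IsHermitian
    rw [conjTranspose_smul, hM.1.eq]
    simp
  · exact (hM.smul hx).2 hv

/-- Ridge-regularization decomposition of the rescaled Tikhonov-regularization function:
for `A` an `r × r` real symmetric positive definite matrix, `H` an `R × r` real matrix and
`x > 0`, `f̃(x) = Hᵀ (H A Hᵀ + x I_R)⁻¹ H = A⁻¹ − x · A⁻¹ (x I_r + A Hᵀ H)⁻¹`. -/
theorem rescaled_tikhonov_ridge_decomposition (r R : ℕ) (hr : 0 < r) (hR : 0 < R)
    (A : Matrix (Fin r) (Fin r) ℝ) (hA : A.PosDef)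
    (H : Matrix (Fin R) (Fin r) ℝ) :
    ∀ x : ℝ, 0 < x →
      IsUnit (x • (1 : Matrix (Fin r) (Fin r) ℝ) + A * Hᵀ * H) ∧
      Hᵀ * (H * A * Hᵀ + x • (1 : Matrix (Fin R) (Fin R) ℝ))⁻¹ * H
        = A⁻¹ - x • (A⁻¹ * (x • (1 : Matrix (Fin r) (Fin r) ℝ) + A * Hᵀ * H)⁻¹) := by
  intro x hx
  have hHt : Hᵀ = Hᴴ := by
    ext i j; simp [conjTranspose_apply]
  have hAd : IsUnit A.det := hA.det_pos.ne'.isUnit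
  -- P := x • A⁻¹ + Hᵀ H is positive definite
  have hHtH : (Hᵀ * H).PosSemidef := by
    rw [hHt]; exact posSemidef_conjTranspose_mul_self H
  have hP : (x • A⁻¹ + Hᵀ * H).PosDef :=
    (posDef_smul_aux hA.inv hx).add_posSemidef hHtH
  set N : Matrix (Fin r) (Fin r) ℝ := x • (1 : Matrix (Fin r) (Fin r) ℝ) + A * Hᵀ * H with hNdef
  have hNP : N = A * (x • A⁻¹ + Hᵀ * H) := by
    rw [hNdef, Matrix.mul_add, Matrix.mul_smul, Matrix.mul_nonsing_inv _ hAd, Matrix.mul_assoc]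
  have hNu : IsUnit N := by
    rw [hNP]; exact hA.isUnit.mul hP.isUnit
  refine ⟨hNu, ?_⟩
  -- M := H A Hᵀ + x I is positive definite
  set M : Matrix (Fin R) (Fin R) ℝ := H * A * Hᵀ + x • (1 : Matrix (Fin R) (Fin R) ℝ) with hMdef
  have hM : M.PosDef := by
    rw [hMdef, hHt]
    exact Matrix.PosDef.posSemidef_add (hA.posSemidef.mul_mul_conjTranspose_same H)
      (posDef_smul_aux Matrix.PosDef.one hx)
  have hMd : IsUnit M.det := hM.det_pos.ne'.isUnit
  set Q : Matrix (Fin r) (Fin r) ℝ := x • (1 : Matrix (Fin r) (Fin r) ℝ) + Hᵀ * H * A with hQdef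
  have hAQ : N * A = A * Q := by
    rw [hNdef, hQdef]
    simp only [Matrix.add_mul, Matrix.mul_add, Matrix.smul_mul, Matrix.mul_smul,
      Matrix.one_mul, Matrix.mul_one, Matrix.mul_assoc]
  have hQu : IsUnit Q := by
    have : Q = A⁻¹ * (N * A) := by
      rw [hAQ, ← Matrix.mul_assoc, Matrix.nonsing_inv_mul _ hAd, Matrix.one_mul]
    rw [this]
    exact (hA.inv.isUnit).mul (hNu.mul hA.isUnit)
  have hQd : IsUnit Q.det := (Matrix.isUnit_iff_isUnit_det Q).mp hQu
  have hQM : Q * Hᵀ = Hᵀ * M := by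
    rw [hQdef, hMdef]
    simp only [Matrix.add_mul, Matrix.mul_add, Matrix.smul_mul, Matrix.mul_smul,
      Matrix.one_mul, Matrix.mul_one, Matrix.mul_assoc]
    rw [add_comm]
  have h1 : Hᵀ * M⁻¹ = Q⁻¹ * Hᵀ := by
    calc Hᵀ * M⁻¹ = Q⁻¹ * (Q * Hᵀ) * M⁻¹ := by
          rw [← Matrix.mul_assoc, Matrix.nonsing_inv_mul _ hQd, Matrix.one_mul]
      _ = Q⁻¹ * Hᵀ := by
          rw [hQM, Matrix.mul_assoc, Matrix.mul_assoc, Matrix.mul_nonsing_inv _ hMd,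
            Matrix.mul_one]
  have h2 : A⁻¹ * N⁻¹ = Q⁻¹ * A⁻¹ := by
    rw [← Matrix.mul_inv_rev, ← Matrix.mul_inv_rev, hAQ]
  have h3 : Q * A⁻¹ - x • A⁻¹ = Hᵀ * H := by
    rw [hQdef, Matrix.add_mul, Matrix.smul_mul, Matrix.one_mul, Matrix.mul_assoc,
      Matrix.mul_nonsing_inv _ hAd, Matrix.mul_one, add_sub_cancel_left]
  calc Hᵀ * M⁻¹ * H = Q⁻¹ * (Hᵀ * H) := by rw [h1, Matrix.mul_assoc]
    _ = Q⁻¹ * (Q * A⁻¹ - x • A⁻¹) := by rw [h3]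
    _ = A⁻¹ - x • (A⁻¹ * N⁻¹) := by
        rw [Matrix.mul_sub, ← Matrix.mul_assoc, Matrix.nonsing_inv_mul _ hQd, Matrix.one_mul,
          Matrix.mul_smul, h2]
end

section
/- Let r, R be positive integers with R ≥ r, A an r×r real symmetric positive definite matrix, and H an R×r real matrix of rank r (equivalently, Hᵀ H is invertible). Then the rescaled Tikhonov-regularization function f̃(x) := Hᵀ (H A Hᵀ + x I_R)⁻¹ H is continuous on a right-neighborhood of zero and converges to A⁻¹ as x → 0⁺: f̃(x) → A⁻¹ in matrix norm as x tends to 0 from the right. -/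
open Matrix

/-- Continuity of the rescaled Tikhonov-regularization function near `0` and its limit:
for `R ≥ r`, `A` an `r × r` real symmetric positive definite matrix, and `H` an `R × r`
real matrix of rank `r`, the function `f̃(x) = Hᵀ (H A Hᵀ + x I_R)⁻¹ H` is continuous on a
right-neighborhood of zero and tends to `A⁻¹` as `x → 0⁺`. -/
theorem rescaled_tikhonov_tendsto_inv (r R : ℕ) (hr : 0 < r) (hrR : r ≤ R)
    (A : Matrix (Fin r) (Fin r) ℝ) (hA : A.PosDef)
    (H : Matrix (Fin R) (Fin r) ℝ) (hH : H.rank = r) :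
    ∃ ε : ℝ, 0 < ε ∧
      ContinuousOn
        (fun x : ℝ => Hᵀ * (H * A * Hᵀ + x • (1 : Matrix (Fin R) (Fin R) ℝ))⁻¹ * H)
        (Set.Ioo 0 ε) ∧
      Filter.Tendsto
        (fun x : ℝ => Hᵀ * (H * A * Hᵀ + x • (1 : Matrix (Fin R) (Fin R) ℝ))⁻¹ * H)
        (nhdsWithin 0 (Set.Ioi 0)) (nhds A⁻¹) := by
  classical
  set K : Matrix (Fin r) (Fin r) ℝ := Hᵀ * H with hKdef
  have hKrank : K.rank = r := by
    rw [hKdef, Matrix.rank_transpose_mul_self, hH]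
  -- K = HᵀH is invertible
  have hKunit : IsUnit K := by
    rw [← Matrix.mulVec_surjective_iff_isUnit]
    have hr' : LinearMap.range K.mulVecLin = ⊤ := by
      apply Submodule.eq_top_of_finrank_eq
      rw [show Module.finrank ℝ (LinearMap.range K.mulVecLin) = K.rank from rfl, hKrank]
      simp
    have hs : Function.Surjective K.mulVecLin := LinearMap.range_eq_top.mp hr'
    intro v
    obtain ⟨w, hw⟩ := hs v
    exact ⟨w, by simpa using hw⟩
  have hKdet : IsUnit K.det := (Matrix.isUnit_iff_isUnit_det _).mp hKunit
  -- the "small" matrix family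
  set N : ℝ → Matrix (Fin r) (Fin r) ℝ := fun x => A * K + x • 1 with hNdef
  have hNcont : Continuous N := continuous_const.add (continuous_id.smul continuous_const)
  set d : ℝ → ℝ := fun x => (N x).det with hddef
  have hdcont : Continuous d := hNcont.matrix_det
  have hd0 : d 0 ≠ 0 := by
    have : N 0 = A * K := by simp [hNdef]
    rw [hddef]
    simp only [this, Matrix.det_mul]
    exact mul_ne_zero hA.det_pos.ne' hKdet.ne_zero
  -- choose ε
  obtain ⟨ε, hε, hball⟩ : ∃ ε > 0, ∀ x : ℝ, dist x 0 < ε → d x ≠ 0 := by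
    have := Metric.eventually_nhds_iff.mp (hdcont.continuousAt.eventually_ne hd0)
    obtain ⟨ε, hε, h⟩ := this
    exact ⟨ε, hε, fun x hx => h hx⟩
  refine ⟨ε, hε, ?_, ?_⟩ <;> ·
    -- auxiliary function
    have g_def : ∀ x : ℝ, K * (N x)⁻¹ = (d x)⁻¹ • (K * (N x).adjugate) := by
      intro x
      rw [Matrix.inv_def, Ring.inverse_eq_inv', Matrix.mul_smul]
    have key : ∀ x₀ : ℝ, d x₀ ≠ 0 → ContinuousAt (fun x => K * (N x)⁻¹) x₀ := by
      intro x₀ h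
      have : (fun x => K * (N x)⁻¹) = fun x => (d x)⁻¹ • (K * (N x).adjugate) :=
        funext g_def
      rw [this]
      exact (hdcont.continuousAt.inv₀ h).smul
        (continuous_const.matrix_mul hNcont.matrix_adjugate).continuousAt
    -- the key identity: f x = K * (N x)⁻¹ for 0 < x with d x ≠ 0
    have heq : ∀ x : ℝ, 0 < x → d x ≠ 0 →
        Hᵀ * (H * A * Hᵀ + x • (1 : Matrix (Fin R) (Fin R) ℝ))⁻¹ * H = K * (N x)⁻¹ := by
      intro x hx hdx
      set M : Matrix (Fin R) (Fin R) ℝ := H * A * Hᵀ + x • 1 with hMdef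
      have hMpd : M.PosDef := by
        have h1 : (H * A * Hᵀ).PosSemidef := by
          have := hA.posSemidef.mul_mul_conjTranspose_same H
          have hHH : Hᴴ = Hᵀ := by ext i j; simp [Matrix.conjTranspose_apply]
          rwa [hHH] at this
        have h2 : (x • (1 : Matrix (Fin R) (Fin R) ℝ)).PosDef := by
          rw [Matrix.smul_one_eq_diagonal]
          exact Matrix.PosDef.diagonal fun _ => hx
        exact Matrix.PosDef.posSemidef_add h1 h2
      have hMdet : IsUnit M.det := (Matrix.isUnit_iff_isUnit_det _).mp hMpd.isUnit
      have hNdet : IsUnit (N x).det := isUnit_iff_ne_zero.mpr hdx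
      have hMH : M * H = H * N x := by
        rw [hMdef, hNdef, hKdef]
        simp [Matrix.add_mul, Matrix.mul_add, Matrix.smul_mul, Matrix.mul_smul,
          Matrix.mul_assoc]
      have h1 : H * (N x)⁻¹ = M⁻¹ * H := by
        have := congrArg (fun B => M⁻¹ * B * (N x)⁻¹) hMH
        simpa [Matrix.mul_assoc, Matrix.nonsing_inv_mul _ hMdet,
          Matrix.mul_nonsing_inv _ hNdet, Matrix.nonsing_inv_mul_cancel_left _ _ hMdet,
          Matrix.mul_nonsing_inv_cancel_right _ _ hNdet] using this
      calc Hᵀ * M⁻¹ * H = Hᵀ * (M⁻¹ * H) := by rw [Matrix.mul_assoc]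
        _ = Hᵀ * (H * (N x)⁻¹) := by rw [← h1]
        _ = K * (N x)⁻¹ := by rw [hKdef, Matrix.mul_assoc]
    first
    | · -- ContinuousOn
        apply ContinuousOn.congr (f := fun x => K * (N x)⁻¹)
        · intro x hx
          exact (key x (hball x (by simp [abs_of_pos hx.1, Real.dist_eq, hx.2]))).continuousWithinAt
        · intro x hx
          exact heq x hx.1 (hball x (by simp [abs_of_pos hx.1, Real.dist_eq, hx.2]))
    | · -- Tendsto
        have hg0 : K * (N 0)⁻¹ = A⁻¹ := by
          have hN0 : N 0 = A * K := by simp [hNdef]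
          rw [hN0, Matrix.mul_inv_rev, ← Matrix.mul_assoc,
            Matrix.mul_nonsing_inv _ hKdet, Matrix.one_mul]
        have ht : Filter.Tendsto (fun x => K * (N x)⁻¹) (nhdsWithin 0 (Set.Ioi 0))
            (nhds A⁻¹) := by
          rw [← hg0]
          exact ((key 0 hd0).tendsto).mono_left nhdsWithin_le_nhds
        refine ht.congr' ?_
        have hmem : Set.Ioo (0:ℝ) ε ∈ nhdsWithin 0 (Set.Ioi 0) :=
          Ioo_mem_nhdsGT_of_mem ⟨le_refl 0, hε⟩
        filter_upwards [hmem] with x hx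
        exact (heq x hx.1 (hball x (by simp [abs_of_pos hx.1, Real.dist_eq, hx.2]))).symm
end

section
/- Let r, R be positive integers, A an r×r real symmetric positive definite matrix, and H an R×r real matrix. Then for every real x > 0, the deviation of the rescaled Tikhonov-regularization function from its x = 0 value satisfies the explicit bound ‖Hᵀ (H A Hᵀ + x I_R)⁻¹ H − A⁻¹‖ ≤ x · ‖A⁻¹‖ · ‖(x I_r + A Hᵀ H)⁻¹‖, where ‖·‖ denotes the ℓ₂ operator norm of a matrix. -/
open Matrix

/-- The ℓ₂ operator norm of a square real matrix: the operator norm of the associated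
continuous linear map on Euclidean space, i.e. `sup {‖Mv‖₂ : ‖v‖₂ ≤ 1}`. -/
noncomputable def l2OpNorm {n : ℕ} (M : Matrix (Fin n) (Fin n) ℝ) : ℝ :=
  ‖(Matrix.toEuclideanCLM (𝕜 := ℝ) (n := Fin n) M :
      EuclideanSpace ℝ (Fin n) →L[ℝ] EuclideanSpace ℝ (Fin n))‖

lemma smul_one_posDef {n : ℕ} {x : ℝ} (hx : 0 < x) :
    (x • (1 : Matrix (Fin n) (Fin n) ℝ)).PosDef := by
  refine Matrix.PosDef.of_dotProduct_mulVec_pos ?_ ?_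
  · simp [Matrix.IsHermitian]
  · intro v hv
    have : (x • (1 : Matrix (Fin n) (Fin n) ℝ)) *ᵥ v = x • v := by
      rw [Matrix.smul_mulVec, Matrix.one_mulVec]
    rw [this]
    have hvv : 0 < dotProduct (star v) v :=
      (dotProduct_star_self_pos_iff).mpr hv
    calc (0:ℝ) < x * dotProduct (star v) v := by positivity
      _ = dotProduct (star v) (x • v) := by rw [dotProduct_smul, smul_eq_mul]

lemma l2OpNorm_mul_le {n : ℕ} (M N : Matrix (Fin n) (Fin n) ℝ) :
    l2OpNorm (M * N) ≤ l2OpNorm M * l2OpNorm N := by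
  unfold l2OpNorm
  rw [_root_.map_mul]
  exact ContinuousLinearMap.opNorm_comp_le _ _

set_option synthInstance.maxHeartbeats 1000000 in
set_option maxHeartbeats 1000000 in
/-- Explicit bound for the deviation of the rescaled Tikhonov-regularization function from
its `x = 0` value: for `A` an `r × r` real symmetric positive definite matrix, `H` an
`R × r` real matrix, and `x > 0`,
`‖Hᵀ (H A Hᵀ + x I_R)⁻¹ H − A⁻¹‖ ≤ x · ‖A⁻¹‖ · ‖(x I_r + A Hᵀ H)⁻¹‖`
in the ℓ₂ operator norm. -/
theorem rescaled_tikhonov_deviation_bound (r R : ℕ) (hr : 0 < r) (hR : 0 < R)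
    (A : Matrix (Fin r) (Fin r) ℝ) (hA : A.PosDef)
    (H : Matrix (Fin R) (Fin r) ℝ) :
    ∀ x : ℝ, 0 < x →
      l2OpNorm (Hᵀ * (H * A * Hᵀ + x • (1 : Matrix (Fin R) (Fin R) ℝ))⁻¹ * H - A⁻¹)
        ≤ x * l2OpNorm A⁻¹
            * l2OpNorm (x • (1 : Matrix (Fin r) (Fin r) ℝ) + A * Hᵀ * H)⁻¹ := by
  intro x hx
  set M : Matrix (Fin R) (Fin R) ℝ := H * A * Hᵀ + x • 1 with hM
  set N : Matrix (Fin r) (Fin r) ℝ := x • 1 + A * Hᵀ * H with hN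
  -- M is positive definite, hence invertible
  have hHAHt : (H * A * Hᵀ).PosSemidef := by
    have := hA.posSemidef.mul_mul_conjTranspose_same H
    simpa using this
  have hMpd : M.PosDef := Matrix.PosDef.posSemidef_add hHAHt (smul_one_posDef hx)
  have hMunit : IsUnit M := hMpd.isUnit
  have hAunit : IsUnit A := hA.isUnit
  -- N = A * (x • A⁻¹ + Hᵀ * H) is invertible
  have hNfact : N = A * (x • A⁻¹ + Hᵀ * H) := by
    rw [hN, Matrix.mul_add, Matrix.mul_smul, Matrix.mul_nonsing_inv _
      ((Matrix.isUnit_iff_isUnit_det A).mp hAunit), Matrix.mul_assoc]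
  have hinner : (x • A⁻¹ + Hᵀ * H).PosDef := by
    have h1 : (x • A⁻¹).PosDef := by
      have := hA.inv
      refine Matrix.PosDef.of_dotProduct_mulVec_pos ?_ (fun v hv => by
        rw [Matrix.smul_mulVec, dotProduct_smul, smul_eq_mul]
        exact mul_pos hx (this.dotProduct_mulVec_pos hv))
      rw [Matrix.IsHermitian, Matrix.conjTranspose_smul, this.isHermitian.eq]
      simp
    have h2 : (Hᵀ * H).PosSemidef := by
      have := Matrix.posSemidef_conjTranspose_mul_self H
      simpa using this
    exact h1.add_posSemidef h2
  have hNunit : IsUnit N := by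
    rw [hNfact]
    exact hAunit.mul hinner.isUnit
  have hMdet := (Matrix.isUnit_iff_isUnit_det M).mp hMunit
  have hNdet := (Matrix.isUnit_iff_isUnit_det N).mp hNunit
  have hAdet := (Matrix.isUnit_iff_isUnit_det A).mp hAunit
  -- Push-through identity: M * H = H * N
  have hpush : M * H = H * N := by
    rw [hM, hN]
    rw [Matrix.add_mul, Matrix.mul_add, Matrix.smul_mul, Matrix.mul_smul,
      Matrix.one_mul]
    rw [Matrix.mul_assoc, Matrix.mul_assoc, Matrix.mul_assoc, Matrix.mul_one]
    abel
  have hinvpush : M⁻¹ * H = H * N⁻¹ := by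
    have : M⁻¹ * (M * H) * N⁻¹ = M⁻¹ * (H * N) * N⁻¹ := by rw [hpush]
    rw [← Matrix.mul_assoc, Matrix.nonsing_inv_mul _ hMdet, Matrix.one_mul] at this
    rw [Matrix.mul_assoc, Matrix.mul_assoc, Matrix.mul_nonsing_inv _ hNdet,
      Matrix.mul_one] at this
    exact this.symm
  -- A⁻¹ = (x • A⁻¹ + Hᵀ * H) * N⁻¹
  have hAinv : A⁻¹ = (x • A⁻¹ + Hᵀ * H) * N⁻¹ := by
    have : A⁻¹ * N = x • A⁻¹ + Hᵀ * H := by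
      rw [hNfact, ← Matrix.mul_assoc, Matrix.nonsing_inv_mul _ hAdet, Matrix.one_mul]
    calc A⁻¹ = A⁻¹ * N * N⁻¹ := by
          rw [Matrix.mul_assoc, Matrix.mul_nonsing_inv _ hNdet, Matrix.mul_one]
      _ = (x • A⁻¹ + Hᵀ * H) * N⁻¹ := by rw [this]
  -- The difference equals (-x) • (A⁻¹ * N⁻¹)
  have hdiff : Hᵀ * M⁻¹ * H - A⁻¹ = (-x) • (A⁻¹ * N⁻¹) := by
    rw [Matrix.mul_assoc, hinvpush, ← Matrix.mul_assoc]
    nth_rewrite 1 [hAinv]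
    rw [Matrix.add_mul, Matrix.smul_mul]
    rw [neg_smul]
    abel
  rw [hdiff]
  unfold l2OpNorm
  rw [_root_.map_smul]
  rw [norm_smul (-x) ((Matrix.toEuclideanCLM (𝕜 := ℝ) (n := Fin r) (A⁻¹ * N⁻¹) :
      EuclideanSpace ℝ (Fin r) →L[ℝ] EuclideanSpace ℝ (Fin r)))]
  simp only [norm_neg, Real.norm_eq_abs, abs_of_pos hx]
  rw [mul_assoc]
  gcongr
  exact l2OpNorm_mul_le A⁻¹ N⁻¹
end
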